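/- The gradient of F(X) = tr(X Log X - X) on the manifold of Hermitian positive-definite matrices, with respect to the Frobenius inner product on Hermitian matrices, is ∇F(X) = Log X. -/

import Mathlib

open Matrix
open scoped ComplexOrder

/-- The principal matrix logarithm of a Hermitian (positive-definite) matrix, defined via the
spectral decomposition; junk value `0` on non-Hermitian matrices. -/
noncomputable def matLog {N : ℕ} (X : Matrix (Fin N) (Fin N) ℂ) : Matrix (Fin N) (Fin N) ℂ :=
  if hX : X.IsHermitian then
    (hX.eigenvectorUnitary : Matrix (Fin N) (Fin N) ℂ) *
      Matrix.diagonal (fun i => (Real.log (hX.eigenvalues i) : ℂ)) *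
      star (hX.eigenvectorUnitary : Matrix (Fin N) (Fin N) ℂ)
  else 0

variable {N : ℕ}

section Conj
variable {U : Matrix (Fin N) (Fin N) ℂ} (hU : U ∈ Matrix.unitaryGroup (Fin N) ℂ)

noncomputable def uconj (U : Matrix (Fin N) (Fin N) ℂ) (d : Fin N → ℂ) :
    Matrix (Fin N) (Fin N) ℂ :=
  U * Matrix.diagonal d * star U

include hU

lemma uconj_mul (d e : Fin N → ℂ) :
    uconj U d * uconj U e = uconj U (fun i => d i * e i) := by
  have h1 : star U * U = 1 := Matrix.mem_unitaryGroup_iff'.mp hU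
  simp only [uconj, Matrix.mul_assoc]
  rw [← Matrix.mul_assoc (star U) U, h1, Matrix.one_mul,
    ← Matrix.mul_assoc (Matrix.diagonal d), Matrix.diagonal_mul_diagonal]

omit hU in
lemma uconj_add (d e : Fin N → ℂ) :
    uconj U d + uconj U e = uconj U (fun i => d i + e i) := by
  simp only [uconj]
  have : Matrix.diagonal (fun i => d i + e i) = Matrix.diagonal d + Matrix.diagonal e := by
    ext i j; by_cases h : i = j <;> simp [Matrix.diagonal, h]
  rw [this, Matrix.mul_add, Matrix.add_mul]

omit hU in
lemma uconj_sub (d e : Fin N → ℂ) :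
    uconj U d - uconj U e = uconj U (fun i => d i - e i) := by
  simp only [uconj]
  have : Matrix.diagonal (fun i => d i - e i) = Matrix.diagonal d - Matrix.diagonal e := by
    ext i j; by_cases h : i = j <;> simp [Matrix.diagonal, h]
  rw [this, Matrix.mul_sub, Matrix.sub_mul]

lemma uconj_one : uconj U (fun _ => 1) = 1 := by
  have h2 : U * star U = 1 := Matrix.mem_unitaryGroup_iff.mp hU
  simp [uconj, Matrix.diagonal_one, h2]

omit hU in
lemma uconj_rsmul (t : ℝ) (d : Fin N → ℂ) :
    t • uconj U d = uconj U (fun i => (t : ℂ) * d i) := by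
  have : (Matrix.diagonal fun i => (t:ℂ) * d i) = t • Matrix.diagonal d := by
    ext i j
    by_cases h : i = j <;> simp [Matrix.diagonal, h, Complex.real_smul]
  simp [uconj, this, Matrix.smul_mul, Matrix.mul_smul]

lemma trace_uconj (d : Fin N → ℂ) : Matrix.trace (uconj U d) = ∑ i, d i := by
  have h1 : star U * U = 1 := Matrix.mem_unitaryGroup_iff'.mp hU
  rw [uconj, Matrix.trace_mul_cycle, h1, Matrix.one_mul, Matrix.trace_diagonal]

lemma ringInverse_uconj (d : Fin N → ℂ) (hd : ∀ i, d i ≠ 0) :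
    Ring.inverse (uconj U d) = uconj U (fun i => (d i)⁻¹) := by
  have hmul : uconj U d * uconj U (fun i => (d i)⁻¹) = 1 := by
    rw [uconj_mul hU]
    have : (fun i => d i * (d i)⁻¹) = fun _ => (1:ℂ) := by
      funext i; exact mul_inv_cancel₀ (hd i)
    rw [this, uconj_one hU]
  have hmul' : uconj U (fun i => (d i)⁻¹) * uconj U d = 1 := by
    rw [uconj_mul hU]
    have : (fun i => (d i)⁻¹ * d i) = fun _ => (1:ℂ) := by
      funext i; exact inv_mul_cancel₀ (hd i)
    rw [this, uconj_one hU]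
  exact Ring.inverse_unit ⟨uconj U d, uconj U (fun i => (d i)⁻¹), hmul, hmul'⟩

omit hU in
lemma trace_uconj_mul (d : Fin N → ℂ) (Y : Matrix (Fin N) (Fin N) ℂ) :
    Matrix.trace (uconj U d * Y) = ∑ i, d i * (star U * Y * U) i i := by
  have h1 : uconj U d * Y = U * (Matrix.diagonal d * (star U * Y)) := by
    simp [uconj, Matrix.mul_assoc]
  rw [h1, Matrix.trace_mul_comm]
  have h2 : Matrix.diagonal d * (star U * Y) * U =
      Matrix.diagonal d * (star U * Y * U) := by rw [Matrix.mul_assoc]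
  rw [h2]
  simp [Matrix.trace, Matrix.diag, Matrix.diagonal_mul, Matrix.mul_assoc]

lemma trace_uconj_mul_mul (d e : Fin N → ℂ) (Y : Matrix (Fin N) (Fin N) ℂ) :
    Matrix.trace (uconj U d * Y * uconj U e) =
      ∑ i, d i * e i * (star U * Y * U) i i := by
  rw [Matrix.trace_mul_comm, ← Matrix.mul_assoc, uconj_mul hU, trace_uconj_mul]
  congr 1; funext i; ring

end Conj

section Spectral
variable {M : Matrix (Fin N) (Fin N) ℂ} (hM : M.PosDef)

lemma eigU_mem (h : M.IsHermitian) :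
    (h.eigenvectorUnitary : Matrix (Fin N) (Fin N) ℂ) ∈ Matrix.unitaryGroup (Fin N) ℂ :=
  (h.eigenvectorUnitary).2

lemma herm_eq_uconj (h : M.IsHermitian) :
    M = uconj (h.eigenvectorUnitary : Matrix (Fin N) (Fin N) ℂ)
      (fun i => (h.eigenvalues i : ℂ)) := by
  have := h.spectral_theorem
  rw [uconj]
  convert this using 3
  simp [Unitary.conjStarAlgAut_apply, Function.comp_def]

lemma matLog_eq_uconj (h : M.IsHermitian) :
    matLog M = uconj (h.eigenvectorUnitary : Matrix (Fin N) (Fin N) ℂ)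
      (fun i => (Real.log (h.eigenvalues i) : ℂ)) := by
  rw [matLog, dif_pos h]; rfl

omit hM in
lemma re_sum_coe (d : Fin N → ℝ) : (∑ i, ((d i : ℂ))).re = ∑ i, d i := by
  rw [Complex.re_sum]; simp

end Spectral

section Keys
variable {M U Y : Matrix (Fin N) (Fin N) ℂ} {ev : Fin N → ℝ}
  (hU : U ∈ Matrix.unitaryGroup (Fin N) ℂ)
  (hM1 : M = uconj U (fun i => (ev i : ℂ)))

include hU hM1

lemma sub_one_eq : M - 1 = uconj U (fun i => ((ev i - 1 : ℝ) : ℂ)) := by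
  rw [hM1, ← uconj_one hU, uconj_sub]
  push_cast
  rfl

lemma one_add_smul_eq (u : ℝ) :
    1 + u • (M - 1) = uconj U (fun i => ((1 + u * (ev i - 1) : ℝ) : ℂ)) := by
  rw [sub_one_eq hU hM1, uconj_rsmul, ← uconj_one hU, uconj_add]
  push_cast
  rfl

lemma inv_one_add_smul_eq (u : ℝ) (hu : ∀ i, 1 + u * (ev i - 1) ≠ 0) :
    Ring.inverse (1 + u • (M - 1)) =
      uconj U (fun i => (((1 + u * (ev i - 1))⁻¹ : ℝ) : ℂ)) := by
  rw [one_add_smul_eq hU hM1, ringInverse_uconj hU]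
  · push_cast; rfl
  · intro i
    exact Complex.ofReal_ne_zero.mpr (hu i)

lemma key2 (u : ℝ) (hu : ∀ i, 1 + u * (ev i - 1) ≠ 0) :
    (Matrix.trace ((M - 1) * (M - 1) * Ring.inverse (1 + u • (M - 1)))).re =
      ∑ i, (ev i - 1) ^ 2 * (1 + u * (ev i - 1))⁻¹ := by
  rw [inv_one_add_smul_eq hU hM1 u hu, sub_one_eq hU hM1, uconj_mul hU, uconj_mul hU]
  have : (fun i => ((ev i - 1 : ℝ) : ℂ) * ((ev i - 1 : ℝ) : ℂ) *
      (((1 + u * (ev i - 1))⁻¹ : ℝ) : ℂ)) =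
      fun i => (((ev i - 1) ^ 2 * (1 + u * (ev i - 1))⁻¹ : ℝ) : ℂ) := by
    funext i; push_cast; ring
  rw [this, trace_uconj hU, re_sum_coe]

lemma key1 (hlog : matLog M = uconj U (fun i => (Real.log (ev i) : ℂ))) :
    (Matrix.trace (M * matLog M - M)).re =
      ∑ i, (ev i * Real.log (ev i) - ev i) := by
  rw [hlog, hM1, uconj_mul hU, uconj_sub]
  have : (fun i => ((ev i : ℂ)) * ((Real.log (ev i) : ℝ) : ℂ) - ((ev i : ℂ))) =
      fun i => ((ev i * Real.log (ev i) - ev i : ℝ) : ℂ) := by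
    funext i; push_cast; ring
  rw [this, trace_uconj hU, re_sum_coe]

omit hU hM1 in
lemma key4 (hlog : matLog M = uconj U (fun i => (Real.log (ev i) : ℂ))) :
    (Matrix.trace (matLog M * Y)).re =
      ∑ i, Real.log (ev i) * ((star U * Y * U) i i).re := by
  rw [hlog, trace_uconj_mul, Complex.re_sum]
  congr 1; funext i
  simp [Complex.mul_re]

lemma key3 (u : ℝ) (hu : ∀ i, 1 + u * (ev i - 1) ≠ 0) :
    (Matrix.trace ((Y * (M - 1) + (M - 1) * Y) * Ring.inverse (1 + u • (M - 1)) -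
        (M - 1) * (M - 1) * (Ring.inverse (1 + u • (M - 1)) * (u • Y) *
          Ring.inverse (1 + u • (M - 1))))).re =
      ∑ i, (2 * (ev i - 1) * (1 + u * (ev i - 1))⁻¹ -
        u * (ev i - 1) ^ 2 * ((1 + u * (ev i - 1))⁻¹) ^ 2) * ((star U * Y * U) i i).re := by
  set A := M - 1 with hA
  set C := Ring.inverse (1 + u • (M - 1)) with hC
  have hAe : A = uconj U (fun i => ((ev i - 1 : ℝ) : ℂ)) := sub_one_eq hU hM1
  have hCe : C = uconj U (fun i => (((1 + u * (ev i - 1))⁻¹ : ℝ) : ℂ)) :=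
    inv_one_add_smul_eq hU hM1 u hu
  have e1 : Matrix.trace ((Y * A) * C) =
      ∑ i, (((1 + u * (ev i - 1))⁻¹ : ℝ) : ℂ) * ((ev i - 1 : ℝ) : ℂ) *
        (star U * Y * U) i i := by
    rw [Matrix.trace_mul_cycle, hAe, hCe, trace_uconj_mul_mul hU]
  have e2 : Matrix.trace ((A * Y) * C) =
      ∑ i, ((ev i - 1 : ℝ) : ℂ) * (((1 + u * (ev i - 1))⁻¹ : ℝ) : ℂ) *
        (star U * Y * U) i i := by
    rw [hAe, hCe, trace_uconj_mul_mul hU]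
  have e3 : Matrix.trace (A * A * (C * (u • Y) * C)) =
      ∑ i, (u : ℂ) * (((ev i - 1 : ℝ) : ℂ) * ((ev i - 1 : ℝ) : ℂ) *
        (((1 + u * (ev i - 1))⁻¹ : ℝ) : ℂ) * (((1 + u * (ev i - 1))⁻¹ : ℝ) : ℂ) *
        (star U * Y * U) i i) := by
    have hassoc : A * A * (C * (u • Y) * C) = (A * A * C) * (u • Y) * C := by
      simp only [Matrix.mul_assoc]
    rw [hassoc, hAe, hCe, uconj_mul hU, uconj_mul hU, trace_uconj_mul_mul hU]
    congr 1; funext i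
    have hsm : star U * (u • Y) * U = u • (star U * Y * U) := by
      rw [Matrix.mul_smul, Matrix.smul_mul]
    rw [hsm]
    simp only [Matrix.smul_apply]
    rw [Complex.real_smul]
    ring
  rw [Matrix.trace_sub, Matrix.add_mul, Matrix.trace_add, e1, e2, e3]
  rw [← Finset.sum_add_distrib, ← Finset.sum_sub_distrib, Complex.re_sum]
  congr 1; funext i
  set z := (star U * Y * U) i i with hz
  have hco : (((1 + u * (ev i - 1))⁻¹ : ℝ) : ℂ) * ((ev i - 1 : ℝ) : ℂ) * z +
      ((ev i - 1 : ℝ) : ℂ) * (((1 + u * (ev i - 1))⁻¹ : ℝ) : ℂ) * z -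
      (u : ℂ) * (((ev i - 1 : ℝ) : ℂ) * ((ev i - 1 : ℝ) : ℂ) *
        (((1 + u * (ev i - 1))⁻¹ : ℝ) : ℂ) * (((1 + u * (ev i - 1))⁻¹ : ℝ) : ℂ) * z) =
      ((2 * (ev i - 1) * (1 + u * (ev i - 1))⁻¹ -
        u * (ev i - 1) ^ 2 * ((1 + u * (ev i - 1))⁻¹) ^ 2 : ℝ) : ℂ) * z := by
    push_cast; ring
  rw [hco, Complex.re_ofReal_mul]

end Keys

section ScalarIntegrals

lemma denom_pos {lam u : ℝ} (hl : 0 < lam) (hu0 : 0 ≤ u) (hu1 : u ≤ 1) :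
    0 < 1 + u * (lam - 1) := by
  rcases lt_or_ge u 1 with h | h
  · nlinarith [mul_nonneg hu0 hl.le]
  · have : u = 1 := le_antisymm hu1 h
    subst this; nlinarith

lemma denom_cont (lam : ℝ) (hl : 0 < lam) :
    ContinuousOn (fun u : ℝ => (1 + u * (lam - 1))⁻¹) (Set.Icc 0 1) := by
  apply ContinuousOn.inv₀
  · fun_prop
  · intro x hx
    exact ne_of_gt (denom_pos hl hx.1 hx.2)

lemma scalarS1 {lam : ℝ} (hl : 0 < lam) :
    ∫ u in (0:ℝ)..1, (1 - u) * ((lam - 1) ^ 2 * (1 + u * (lam - 1))⁻¹) =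
      lam * Real.log lam - lam + 1 := by
  have hne : ∀ u ∈ Set.uIcc (0:ℝ) 1, 1 + u * (lam - 1) ≠ 0 := by
    intro u hu
    rw [Set.uIcc_of_le (by norm_num : (0:ℝ) ≤ 1)] at hu
    exact ne_of_gt (denom_pos hl hu.1 hu.2)
  have hderiv : ∀ u ∈ Set.uIcc (0:ℝ) 1,
      HasDerivAt (fun u : ℝ => lam * Real.log (1 + u * (lam - 1)) - (lam - 1) * u)
        ((1 - u) * ((lam - 1) ^ 2 * (1 + u * (lam - 1))⁻¹)) u := by
    intro u hu
    have hinner : HasDerivAt (fun u : ℝ => 1 + u * (lam - 1)) (lam - 1) u := by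
      simpa using (hasDerivAt_mul_const (lam - 1)).const_add 1
    have hlog := (Real.hasDerivAt_log (hne u hu)).comp u hinner
    have h2 : HasDerivAt (fun u : ℝ => (lam - 1) * u) (lam - 1) u := by
      simpa using (hasDerivAt_id u).const_mul (lam - 1)
    have := (hlog.const_mul lam).sub h2
    refine this.congr_deriv ?_
    have h3 := hne u hu
    field_simp
    ring
  have hint : IntervalIntegrable
      (fun u : ℝ => (1 - u) * ((lam - 1) ^ 2 * (1 + u * (lam - 1))⁻¹)) MeasureTheory.volume 0 1 := by
    apply ContinuousOn.intervalIntegrable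
    rw [Set.uIcc_of_le (by norm_num : (0:ℝ) ≤ 1)]
    exact ((continuous_const.sub continuous_id).continuousOn).mul
      (continuousOn_const.mul (denom_cont lam hl))
  rw [intervalIntegral.integral_eq_sub_of_hasDerivAt hderiv hint]
  have : (1 : ℝ) + 1 * (lam - 1) = lam := by ring
  simp [this]
  ring

lemma scalarS2 {lam : ℝ} (hl : 0 < lam) :
    ∫ u in (0:ℝ)..1, (1 - u) * (2 * (lam - 1) * (1 + u * (lam - 1))⁻¹ -
        u * (lam - 1) ^ 2 * ((1 + u * (lam - 1))⁻¹) ^ 2) = Real.log lam := by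
  have hne : ∀ u ∈ Set.uIcc (0:ℝ) 1, 1 + u * (lam - 1) ≠ 0 := by
    intro u hu
    rw [Set.uIcc_of_le (by norm_num : (0:ℝ) ≤ 1)] at hu
    exact ne_of_gt (denom_pos hl hu.1 hu.2)
  have hderiv : ∀ u ∈ Set.uIcc (0:ℝ) 1,
      HasDerivAt (fun u : ℝ => Real.log (1 + u * (lam - 1)) - u + lam * (u * (1 + u * (lam - 1))⁻¹))
        ((1 - u) * (2 * (lam - 1) * (1 + u * (lam - 1))⁻¹ -
          u * (lam - 1) ^ 2 * ((1 + u * (lam - 1))⁻¹) ^ 2)) u := by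
    intro u hu
    have hinner : HasDerivAt (fun u : ℝ => 1 + u * (lam - 1)) (lam - 1) u := by
      simpa using (hasDerivAt_mul_const (lam - 1)).const_add 1
    have hlog := (Real.hasDerivAt_log (hne u hu)).comp u hinner
    have hinv : HasDerivAt (fun u : ℝ => (1 + u * (lam - 1))⁻¹)
        (-(lam - 1) / (1 + u * (lam - 1)) ^ 2) u := hinner.inv (hne u hu)
    have hmul := (hasDerivAt_id u).mul hinv
    have := ((hlog.sub (hasDerivAt_id u)).add ((hmul).const_mul lam))
    refine this.congr_deriv ?_
    have h3 := hne u hu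
    simp only [id_eq]
    field_simp
    ring
  have hint : IntervalIntegrable
      (fun u : ℝ => (1 - u) * (2 * (lam - 1) * (1 + u * (lam - 1))⁻¹ -
        u * (lam - 1) ^ 2 * ((1 + u * (lam - 1))⁻¹) ^ 2)) MeasureTheory.volume 0 1 := by
    apply ContinuousOn.intervalIntegrable
    rw [Set.uIcc_of_le (by norm_num : (0:ℝ) ≤ 1)]
    apply ContinuousOn.mul
    · fun_prop
    apply ContinuousOn.sub
    · exact continuousOn_const.mul (denom_cont lam hl)
    · exact ((continuous_id.mul continuous_const).continuousOn).mul ((denom_cont lam hl).pow 2)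
  rw [intervalIntegral.integral_eq_sub_of_hasDerivAt hderiv hint]
  have h1 : (1 : ℝ) + 1 * (lam - 1) = lam := by ring
  have h0 : (1 : ℝ) + 0 * (lam - 1) = 1 := by ring
  rw [h1, h0]
  simp [hl.ne']

end ScalarIntegrals

section Perturb
variable {M X Y : Matrix (Fin N) (Fin N) ℂ}

lemma isHermitian_rsmul (t : ℝ) (hY : Y.IsHermitian) : (t • Y).IsHermitian := by
  unfold Matrix.IsHermitian at *
  rw [Matrix.conjTranspose_smul, star_trivial, hY]

lemma quad_lower (h : M.IsHermitian) (m : ℝ) (hm : ∀ i, m ≤ h.eigenvalues i)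
    (x : Fin N → ℂ) :
    (m : ℂ) * dotProduct (star x) x ≤ dotProduct (star x) (M *ᵥ x) := by
  have hsub : M - m • 1 = uconj (h.eigenvectorUnitary : Matrix (Fin N) (Fin N) ℂ)
      (fun i => ((h.eigenvalues i - m : ℝ) : ℂ)) := by
    rw [show (fun i => ((h.eigenvalues i - m : ℝ) : ℂ)) =
        fun i => ((h.eigenvalues i : ℂ)) - (m : ℂ) * 1 by funext i; push_cast; ring,
      ← uconj_sub, ← uconj_rsmul, uconj_one (eigU_mem h), ← herm_eq_uconj h]
  have hpsd : (M - m • 1).PosSemidef := by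
    rw [hsub, uconj, Matrix.star_eq_conjTranspose]
    refine Matrix.PosSemidef.mul_mul_conjTranspose_same
      (Matrix.PosSemidef.diagonal ?_) _
    intro i
    show (0:ℂ) ≤ ((h.eigenvalues i - m : ℝ) : ℂ)
    have : (0:ℝ) ≤ h.eigenvalues i - m := sub_nonneg.mpr (hm i)
    exact_mod_cast this
  have := hpsd.dotProduct_mulVec_nonneg x
  rw [Matrix.sub_mulVec, dotProduct_sub, sub_nonneg] at this
  refine le_trans (le_of_eq ?_) this
  rw [Matrix.smul_mulVec, Matrix.one_mulVec, dotProduct_smul, Complex.real_smul]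

lemma quad_upper (h : M.IsHermitian) (K : ℝ) (hm : ∀ i, h.eigenvalues i ≤ K)
    (x : Fin N → ℂ) :
    dotProduct (star x) (M *ᵥ x) ≤ (K : ℂ) * dotProduct (star x) x := by
  have hsub : K • (1 : Matrix (Fin N) (Fin N) ℂ) - M =
      uconj (h.eigenvectorUnitary : Matrix (Fin N) (Fin N) ℂ)
      (fun i => ((K - h.eigenvalues i : ℝ) : ℂ)) := by
    rw [show (fun i => ((K - h.eigenvalues i : ℝ) : ℂ)) =
        fun i => (K : ℂ) * 1 - ((h.eigenvalues i : ℂ)) by funext i; push_cast; ring,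
      ← uconj_sub, ← uconj_rsmul, uconj_one (eigU_mem h), ← herm_eq_uconj h]
  have hpsd : (K • (1 : Matrix (Fin N) (Fin N) ℂ) - M).PosSemidef := by
    rw [hsub, uconj, Matrix.star_eq_conjTranspose]
    refine Matrix.PosSemidef.mul_mul_conjTranspose_same
      (Matrix.PosSemidef.diagonal ?_) _
    intro i
    show (0:ℂ) ≤ ((K - h.eigenvalues i : ℝ) : ℂ)
    have : (0:ℝ) ≤ K - h.eigenvalues i := sub_nonneg.mpr (hm i)
    exact_mod_cast this
  have := hpsd.dotProduct_mulVec_nonneg x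
  rw [Matrix.sub_mulVec, dotProduct_sub, sub_nonneg] at this
  refine le_trans this (le_of_eq ?_)
  rw [Matrix.smul_mulVec, Matrix.one_mulVec, dotProduct_smul, Complex.real_smul]

lemma exists_posdef_ball (hX : X.PosDef) (hY : Y.IsHermitian) :
    ∃ δ : ℝ, 0 < δ ∧ ∀ t : ℝ, |t| < δ → (X + t • Y).PosDef := by
  obtain ⟨m, hm_pos, hm⟩ : ∃ m : ℝ, 0 < m ∧ ∀ i, m ≤ hX.1.eigenvalues i := by
    rcases isEmpty_or_nonempty (Fin N) with hN | hN
    · exact ⟨1, one_pos, fun i => isEmptyElim i⟩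
    · obtain ⟨i0, _, hi0⟩ := Finset.exists_min_image Finset.univ hX.1.eigenvalues
        ⟨Classical.arbitrary _, Finset.mem_univ _⟩
      exact ⟨hX.1.eigenvalues i0, hX.eigenvalues_pos i0,
        fun i => hi0 i (Finset.mem_univ i)⟩
  set K : ℝ := ∑ i, |hY.eigenvalues i| with hK_def
  have hK_nonneg : 0 ≤ K := Finset.sum_nonneg fun i _ => abs_nonneg _
  have hKbound : ∀ i, |hY.eigenvalues i| ≤ K := fun i =>
    Finset.single_le_sum (f := fun j => |hY.eigenvalues j|)
      (fun j _ => abs_nonneg _) (Finset.mem_univ i)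
  refine ⟨m / (K + 1), by positivity, fun t ht => ?_⟩
  rw [Matrix.posDef_iff_dotProduct_mulVec]
  constructor
  · exact hX.1.add (isHermitian_rsmul t hY)
  · intro x hx
    rw [Matrix.add_mulVec, dotProduct_add]
    have hs : 0 < dotProduct (star x) x :=
      dotProduct_star_self_pos_iff.mpr hx
    set s := dotProduct (star x) x with hs_def
    set q := dotProduct (star x) (X *ᵥ x) with hq_def
    have hq : (m : ℂ) * s ≤ q := quad_lower hX.1 m hm x
    set r := dotProduct (star x) (Y *ᵥ x) with hr_def
    have hr_up : r ≤ (K : ℂ) * s := quad_upper hY K (fun i => le_of_abs_le (hKbound i)) x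
    have hr_lo : ((-K : ℝ) : ℂ) * s ≤ r :=
      quad_lower hY (-K) (fun i => neg_le_of_abs_le (hKbound i)) x
    have htr : dotProduct (star x) ((t • Y) *ᵥ x) = (t : ℂ) * r := by
      rw [Matrix.smul_mulVec, dotProduct_smul, Complex.real_smul]
    rw [htr]
    rw [Complex.lt_def] at hs
    obtain ⟨hs_re, hs_im⟩ := hs
    have hsim : s.im = 0 := by simpa using hs_im.symm
    have hsre : 0 < s.re := by simpa using hs_re
    rw [Complex.le_def] at hq hr_up hr_lo
    simp only [Complex.mul_re, Complex.mul_im, Complex.ofReal_re, Complex.ofReal_im, hsim,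
      mul_zero, zero_mul, sub_zero, add_zero, zero_add] at hq hr_up hr_lo
    obtain ⟨hq1, hq2⟩ := hq
    obtain ⟨hup1, hup2⟩ := hr_up
    obtain ⟨hlo1, hlo2⟩ := hr_lo
    have hqim : q.im = 0 := hq2.symm
    have hrim : r.im = 0 := hup2
    rw [Complex.lt_def]
    constructor
    · simp only [Complex.add_re, Complex.mul_re, Complex.ofReal_re, Complex.ofReal_im,
        Complex.zero_re, hrim, mul_zero, zero_mul, sub_zero]
      have htK : |t| * (K + 1) < m := by
        rw [lt_div_iff₀ (by positivity : (0:ℝ) < K + 1)] at ht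
        exact ht
      have habs : |t * r.re| ≤ |t| * (K * s.re) := by
        rw [abs_mul]
        have h5 : |r.re| ≤ K * s.re := abs_le.mpr ⟨by linarith [hlo1], hup1⟩
        exact mul_le_mul_of_nonneg_left h5 (abs_nonneg t)
      nlinarith [neg_abs_le (t * r.re), abs_nonneg t, hsre,
        mul_lt_mul_of_pos_right htK hsre]
    · simp only [Complex.add_im, Complex.mul_im, Complex.ofReal_re, Complex.ofReal_im,
        Complex.zero_im, hrim, hqim, mul_zero, zero_mul, add_zero, zero_add]

lemma one_add_smul_posDef (hM : M.PosDef) {u : ℝ} (hu0 : 0 ≤ u) (hu1 : u ≤ 1) :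
    (1 + u • (M - 1)).PosDef := by
  have hid : (1 : Matrix (Fin N) (Fin N) ℂ) + u • (M - 1) =
      (1 - u) • (1 : Matrix (Fin N) (Fin N) ℂ) + u • M := by
    rw [smul_sub, sub_smul, one_smul]
    abel
  rw [hid]
  rcases eq_or_lt_of_le hu0 with h | h
  · rw [← h]
    simpa using Matrix.PosDef.one
  · have h1 : ((1 - u) • (1 : Matrix (Fin N) (Fin N) ℂ)).PosSemidef := by
      rw [Matrix.posSemidef_iff_dotProduct_mulVec]
      constructor
      · exact isHermitian_rsmul _ Matrix.isHermitian_one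
      · intro x
        rw [Matrix.smul_mulVec, Matrix.one_mulVec, dotProduct_smul,
          Complex.real_smul]
        have h2 : (0:ℂ) ≤ ((1 - u : ℝ) : ℂ) := by
          have : (0:ℝ) ≤ 1 - u := by linarith
          exact_mod_cast this
        exact mul_nonneg h2 (dotProduct_star_self_nonneg x)
    have h2 : (u • M).PosDef := by
      rw [Matrix.posDef_iff_dotProduct_mulVec]
      constructor
      · exact isHermitian_rsmul _ hM.1
      · intro x hx
        rw [Matrix.smul_mulVec, dotProduct_smul, Complex.real_smul]
        have hu' : (0:ℂ) < (u : ℂ) := by exact_mod_cast h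
        exact mul_pos hu' (hM.dotProduct_mulVec_pos hx)
    exact Matrix.PosDef.posSemidef_add h1 h2

lemma one_add_smul_isUnit (hM : M.PosDef) {u : ℝ} (hu0 : 0 ≤ u) (hu1 : u ≤ 1) :
    IsUnit (1 + u • (M - 1)) :=
  (one_add_smul_posDef hM hu0 hu1).isUnit

end Perturb

section Analysis

attribute [local instance] Matrix.frobeniusNormedAddCommGroup Matrix.frobeniusNormedRing
  Matrix.frobeniusNormedAlgebra Matrix.frobeniusIsBoundedSMul Matrix.frobeniusNormedSpace

noncomputable def reTrace {N : ℕ} : Matrix (Fin N) (Fin N) ℂ →L[ℝ] ℝ :=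
  LinearMap.toContinuousLinearMap
    (Complex.reLm.comp ((Matrix.traceLinearMap (Fin N) ℂ ℂ).restrictScalars ℝ))

@[simp] lemma reTrace_apply (A : Matrix (Fin N) (Fin N) ℂ) :
    reTrace A = (Matrix.trace A).re := rfl

variable (X Y : Matrix (Fin N) (Fin N) ℂ)

noncomputable def Fz (t u : ℝ) : ℝ :=
  (1 - u) * (Matrix.trace ((X + t • Y - 1) * (X + t • Y - 1) *
    Ring.inverse (1 + u • (X + t • Y - 1)))).re

noncomputable def Fz' (t u : ℝ) : ℝ :=
  (1 - u) * (Matrix.trace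
    ((Y * (X + t • Y - 1) + (X + t • Y - 1) * Y) * Ring.inverse (1 + u • (X + t • Y - 1)) -
      (X + t • Y - 1) * (X + t • Y - 1) *
        (Ring.inverse (1 + u • (X + t • Y - 1)) * (u • Y) *
          Ring.inverse (1 + u • (X + t • Y - 1))))).re

lemma hasDerivAt_Fz {t u : ℝ} (ht : (X + t • Y).PosDef) (hu0 : 0 ≤ u) (hu1 : u ≤ 1) :
    HasDerivAt (fun s => Fz X Y s u) (Fz' X Y t u) t := by
  have hA : HasDerivAt (fun s : ℝ => X + s • Y - 1) Y t := by
    have h1 : HasDerivAt (fun s : ℝ => s • Y) ((1:ℝ) • Y) t := (hasDerivAt_id t).smul_const Y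
    have h2 := (h1.const_add X).sub_const 1
    rw [one_smul] at h2
    exact h2
  have hB : HasDerivAt (fun s : ℝ => 1 + u • (X + s • Y - 1)) (u • Y) t :=
    (hA.const_smul u).const_add 1
  have hBu : IsUnit (1 + u • (X + t • Y - 1)) := one_add_smul_isUnit ht hu0 hu1
  set C := Ring.inverse (1 + u • (X + t • Y - 1)) with hC_def
  have hCunit : C = ↑hBu.unit⁻¹ := by
    calc C = Ring.inverse (↑hBu.unit) := by rw [hBu.unit_spec]
    _ = ↑hBu.unit⁻¹ := Ring.inverse_unit _
  have hC : HasDerivAt (fun s : ℝ => Ring.inverse (1 + u • (X + s • Y - 1)))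
      (-(C * (u • Y) * C)) t := by
    have hf := hasFDerivAt_ringInverse (𝕜 := ℝ) hBu.unit
    rw [hBu.unit_spec] at hf
    have := hf.comp_hasDerivAt t hB
    refine this.congr_deriv ?_
    rw [hCunit]
    simp [ContinuousLinearMap.mulLeftRight_apply]
  have hP : HasDerivAt (fun s : ℝ => (X + s • Y - 1) * (X + s • Y - 1))
      (Y * (X + t • Y - 1) + (X + t • Y - 1) * Y) t := hA.mul hA
  have hQ := hP.mul hC
  have hT := (reTrace (N := N)).hasFDerivAt.comp_hasDerivAt t hQ
  have := hT.const_mul (1 - u)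
  refine this.congr_deriv ?_
  rw [Fz']
  change (1 - u) * (Matrix.trace (_ : Matrix (Fin N) (Fin N) ℂ)).re = _
  rw [← hC_def]
  congr 1
  symm
  rw [sub_eq_add_neg, ← mul_neg]

lemma continuous_Bfun : Continuous (fun p : ℝ × ℝ => (1 : Matrix (Fin N) (Fin N) ℂ) +
    p.2 • (X + p.1 • Y - 1)) := by
  apply continuous_const.add
  exact continuous_snd.smul ((continuous_const.add (continuous_fst.smul continuous_const)).sub
    continuous_const)

lemma continuousOn_Cfun {ε : ℝ} (hP : ∀ t : ℝ, |t| ≤ ε → (X + t • Y).PosDef) :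
    ContinuousOn (fun p : ℝ × ℝ => Ring.inverse ((1 : Matrix (Fin N) (Fin N) ℂ) +
      p.2 • (X + p.1 • Y - 1))) (Set.Icc (-ε) ε ×ˢ Set.Icc (0:ℝ) 1) := by
  intro p hp
  obtain ⟨hp1, hp2⟩ := hp
  have hpd : (X + p.1 • Y).PosDef := hP p.1 (abs_le.mpr ⟨hp1.1, hp1.2⟩)
  have hBu : IsUnit ((1 : Matrix (Fin N) (Fin N) ℂ) + p.2 • (X + p.1 • Y - 1)) :=
    one_add_smul_isUnit hpd hp2.1 hp2.2
  have h1 : ContinuousAt Ring.inverse ((1 : Matrix (Fin N) (Fin N) ℂ) +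
      p.2 • (X + p.1 • Y - 1)) := by
    have := NormedRing.inverse_continuousAt hBu.unit
    rwa [hBu.unit_spec] at this
  have h2 := ContinuousAt.comp (g := Ring.inverse)
    (f := fun p : ℝ × ℝ => (1 : Matrix (Fin N) (Fin N) ℂ) + p.2 • (X + p.1 • Y - 1))
    (x := p) h1 (continuous_Bfun X Y).continuousAt
  exact h2.continuousWithinAt

lemma continuousOn_FzFz' {ε : ℝ} (hP : ∀ t : ℝ, |t| ≤ ε → (X + t • Y).PosDef) :
    ContinuousOn (fun p : ℝ × ℝ => Fz X Y p.1 p.2) (Set.Icc (-ε) ε ×ˢ Set.Icc (0:ℝ) 1) ∧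
    ContinuousOn (fun p : ℝ × ℝ => Fz' X Y p.1 p.2) (Set.Icc (-ε) ε ×ˢ Set.Icc (0:ℝ) 1) := by
  have cA : Continuous (fun p : ℝ × ℝ => X + p.1 • Y - 1) :=
    (continuous_const.add (continuous_fst.smul continuous_const)).sub continuous_const
  have cC := continuousOn_Cfun X Y hP
  have cu : Continuous (fun p : ℝ × ℝ => (1 : ℝ) - p.2) := continuous_const.sub continuous_snd
  have cuY : Continuous (fun p : ℝ × ℝ => p.2 • Y) := continuous_snd.smul continuous_const
  have cT := (reTrace (N := N)).continuous
  constructor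
  · apply ContinuousOn.mul cu.continuousOn
    have : ContinuousOn (fun p : ℝ × ℝ => (X + p.1 • Y - 1) * (X + p.1 • Y - 1) *
        Ring.inverse ((1 : Matrix (Fin N) (Fin N) ℂ) + p.2 • (X + p.1 • Y - 1)))
        (Set.Icc (-ε) ε ×ˢ Set.Icc (0:ℝ) 1) :=
      ((cA.continuousOn.mul cA.continuousOn).mul cC)
    exact (cT.comp_continuousOn this).congr (fun p hp => rfl)
  · apply ContinuousOn.mul cu.continuousOn
    have : ContinuousOn (fun p : ℝ × ℝ =>
        (Y * (X + p.1 • Y - 1) + (X + p.1 • Y - 1) * Y) *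
          Ring.inverse ((1 : Matrix (Fin N) (Fin N) ℂ) + p.2 • (X + p.1 • Y - 1)) -
        (X + p.1 • Y - 1) * (X + p.1 • Y - 1) *
          (Ring.inverse ((1 : Matrix (Fin N) (Fin N) ℂ) + p.2 • (X + p.1 • Y - 1)) * (p.2 • Y) *
            Ring.inverse ((1 : Matrix (Fin N) (Fin N) ℂ) + p.2 • (X + p.1 • Y - 1))))
        (Set.Icc (-ε) ε ×ˢ Set.Icc (0:ℝ) 1) := by
      apply ContinuousOn.sub
      · exact ((continuous_const.mul cA).add (cA.mul continuous_const)).continuousOn.mul cC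
      · exact (cA.continuousOn.mul cA.continuousOn).mul
          ((cC.mul cuY.continuousOn).mul cC)
    exact (cT.comp_continuousOn this).congr (fun p hp => rfl)

lemma exists_bound_Fz' {ε : ℝ} (hP : ∀ t : ℝ, |t| ≤ ε → (X + t • Y).PosDef) :
    ∃ C : ℝ, ∀ t u : ℝ, |t| ≤ ε → u ∈ Set.Icc (0:ℝ) 1 → |Fz' X Y t u| ≤ C := by
  have hK : IsCompact (Set.Icc (-ε) ε ×ˢ Set.Icc (0:ℝ) 1) :=
    isCompact_Icc.prod isCompact_Icc
  obtain ⟨C, hC⟩ := hK.exists_bound_of_continuousOn (continuousOn_FzFz' X Y hP).2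
  refine ⟨C, fun t u ht hu => ?_⟩
  have := hC (t, u) ⟨Set.mem_Icc.mpr (abs_le.mp ht), hu⟩
  simpa [Real.norm_eq_abs] using this

lemma continuousOn_Fz_section {ε t : ℝ} (hε : 0 ≤ ε) (hP : ∀ s : ℝ, |s| ≤ ε → (X + s • Y).PosDef)
    (ht : |t| ≤ ε) : ContinuousOn (fun u => Fz X Y t u) (Set.Icc (0:ℝ) 1) := by
  have h1 := (continuousOn_FzFz' X Y hP).1
  have h2 : ContinuousOn (fun u : ℝ => ((t, u) : ℝ × ℝ)) (Set.Icc (0:ℝ) 1) :=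
    (continuous_const.prodMk continuous_id).continuousOn
  exact h1.comp h2 (fun u hu => ⟨Set.mem_Icc.mpr (abs_le.mp ht), hu⟩)

lemma continuousOn_Fz'_section {ε t : ℝ} (hε : 0 ≤ ε) (hP : ∀ s : ℝ, |s| ≤ ε → (X + s • Y).PosDef)
    (ht : |t| ≤ ε) : ContinuousOn (fun u => Fz' X Y t u) (Set.Icc (0:ℝ) 1) := by
  have h1 := (continuousOn_FzFz' X Y hP).2
  have h2 : ContinuousOn (fun u : ℝ => ((t, u) : ℝ × ℝ)) (Set.Icc (0:ℝ) 1) :=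
    (continuous_const.prodMk continuous_id).continuousOn
  exact h1.comp h2 (fun u hu => ⟨Set.mem_Icc.mpr (abs_le.mp ht), hu⟩)

lemma hasDerivAt_integral_Fz (hX : X.PosDef) (hY : Y.IsHermitian) :
    ∃ δ : ℝ, 0 < δ ∧ (∀ t : ℝ, |t| < δ → (X + t • Y).PosDef) ∧
      HasDerivAt (fun t => ∫ u in (0:ℝ)..1, Fz X Y t u)
        (∫ u in (0:ℝ)..1, Fz' X Y 0 u) 0 := by
  obtain ⟨δ, hδpos, hδ⟩ := exists_posdef_ball hX hY
  set ε := δ / 2 with hε_def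
  have hεpos : 0 < ε := by positivity
  have hP : ∀ s : ℝ, |s| ≤ ε → (X + s • Y).PosDef := fun s hs =>
    hδ s (lt_of_le_of_lt hs (by rw [hε_def]; linarith))
  obtain ⟨C, hC⟩ := exists_bound_Fz' X Y hP
  have hIoc : Set.uIoc (0:ℝ) 1 = Set.Ioc (0:ℝ) 1 := Set.uIoc_of_le (by norm_num)
  have hmeas : ∀ t : ℝ, |t| ≤ ε → MeasureTheory.AEStronglyMeasurable (Fz X Y t)
      (MeasureTheory.volume.restrict (Set.uIoc (0:ℝ) 1)) := by
    intro t ht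
    rw [hIoc]
    exact ((continuousOn_Fz_section X Y hεpos.le hP ht).mono Set.Ioc_subset_Icc_self
      ).aestronglyMeasurable measurableSet_Ioc
  refine ⟨δ, hδpos, hδ, ?_⟩
  have h1 : ∀ᶠ t in nhds (0:ℝ), MeasureTheory.AEStronglyMeasurable (Fz X Y t)
      (MeasureTheory.volume.restrict (Set.uIoc (0:ℝ) 1)) := by
    filter_upwards [Metric.ball_mem_nhds (0:ℝ) hεpos] with t ht
    exact hmeas t (le_of_lt (by simpa [Real.norm_eq_abs] using ht))
  have h2 : IntervalIntegrable (Fz X Y 0) MeasureTheory.volume 0 1 := by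
    apply ContinuousOn.intervalIntegrable
    rw [Set.uIcc_of_le (by norm_num : (0:ℝ) ≤ 1)]
    exact continuousOn_Fz_section X Y hεpos.le hP (by simpa using hεpos.le)
  have h3 : MeasureTheory.AEStronglyMeasurable (Fz' X Y 0)
      (MeasureTheory.volume.restrict (Set.uIoc (0:ℝ) 1)) := by
    rw [hIoc]
    exact ((continuousOn_Fz'_section X Y hεpos.le hP (by simpa using hεpos.le)).mono
      Set.Ioc_subset_Icc_self).aestronglyMeasurable measurableSet_Ioc
  have h4 : ∀ᵐ u ∂(MeasureTheory.volume : MeasureTheory.Measure ℝ), u ∈ Set.uIoc (0:ℝ) 1 →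
      ∀ t ∈ Metric.ball (0:ℝ) ε, ‖Fz' X Y t u‖ ≤ (fun _ : ℝ => C) u := by
    apply MeasureTheory.ae_of_all
    intro u hu t ht
    rw [hIoc] at hu
    have ht' : |t| ≤ ε := le_of_lt (by simpa [Real.norm_eq_abs] using ht)
    simpa [Real.norm_eq_abs] using hC t u ht' ⟨hu.1.le, hu.2⟩
  have h5 : IntervalIntegrable (fun _ : ℝ => C) MeasureTheory.volume 0 1 :=
    intervalIntegrable_const
  have h6 : ∀ᵐ u ∂(MeasureTheory.volume : MeasureTheory.Measure ℝ), u ∈ Set.uIoc (0:ℝ) 1 →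
      ∀ t ∈ Metric.ball (0:ℝ) ε, HasDerivAt (fun t => Fz X Y t u) (Fz' X Y t u) t := by
    apply MeasureTheory.ae_of_all
    intro u hu t ht
    rw [hIoc] at hu
    have ht' : |t| < δ := by
      have h7 : |t| < ε := by simpa [Real.norm_eq_abs] using ht
      rw [hε_def] at h7
      linarith
    exact hasDerivAt_Fz X Y (hδ t ht') hu.1.le hu.2
  exact (intervalIntegral.hasDerivAt_integral_of_dominated_loc_of_deriv_le (Metric.ball_mem_nhds 0 hεpos)
    h1 h2 h3 h4 h5 h6).2

end Analysis

section Assembly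
variable (X Y : Matrix (Fin N) (Fin N) ℂ)

lemma integral_Fz_eq {t : ℝ} (ht : (X + t • Y).PosDef) :
    (Matrix.trace ((X + t • Y) * matLog (X + t • Y) - (X + t • Y))).re =
      (∫ u in (0:ℝ)..1, Fz X Y t u) - N := by
  set M := X + t • Y with hM_def
  have h := ht.1
  set ev := h.eigenvalues with hev_def
  have hU := eigU_mem h
  have hM1 := herm_eq_uconj h
  have hlog := matLog_eq_uconj h
  have hevpos : ∀ i, 0 < ev i := fun i => ht.eigenvalues_pos i
  have hL : (Matrix.trace (M * matLog M - M)).re = ∑ i, (ev i * Real.log (ev i) - ev i) :=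
    key1 hU hM1 hlog
  have hEq : Set.EqOn (fun u => Fz X Y t u)
      (fun u => ∑ i, (1 - u) * ((ev i - 1) ^ 2 * (1 + u * (ev i - 1))⁻¹))
      (Set.uIcc (0:ℝ) 1) := by
    intro u hu
    rw [Set.uIcc_of_le (by norm_num : (0:ℝ) ≤ 1)] at hu
    have hu' : ∀ i, 1 + u * (ev i - 1) ≠ 0 := fun i =>
      ne_of_gt (denom_pos (hevpos i) hu.1 hu.2)
    show Fz X Y t u = _
    rw [Fz, ← hM_def, key2 hU hM1 u hu', Finset.mul_sum]
  rw [intervalIntegral.integral_congr hEq, intervalIntegral.integral_finset_sum]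
  · have : ∀ i ∈ Finset.univ, (∫ u in (0:ℝ)..1, (1 - u) * ((ev i - 1) ^ 2 *
        (1 + u * (ev i - 1))⁻¹)) = ev i * Real.log (ev i) - ev i + 1 := by
      intro i _
      rw [scalarS1 (hevpos i)]
    rw [Finset.sum_congr rfl this, Finset.sum_add_distrib, hL]
    simp [Finset.card_univ]
  · intro i _
    apply ContinuousOn.intervalIntegrable
    rw [Set.uIcc_of_le (by norm_num : (0:ℝ) ≤ 1)]
    exact ((continuous_const.sub continuous_id).continuousOn).mul
      (continuousOn_const.mul (denom_cont (ev i) (hevpos i)))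

lemma integral_Fz'_eq (hX : X.PosDef) :
    (∫ u in (0:ℝ)..1, Fz' X Y 0 u) = (Matrix.trace (matLog X * Y)).re := by
  have h := hX.1
  set ev := h.eigenvalues with hev_def
  have hU := eigU_mem h
  have hM1 := herm_eq_uconj h
  have hlog := matLog_eq_uconj h
  have hevpos : ∀ i, 0 < ev i := fun i => hX.eigenvalues_pos i
  set U := (h.eigenvectorUnitary : Matrix (Fin N) (Fin N) ℂ) with hU_def
  set w : Fin N → ℝ := fun i => ((star U * Y * U) i i).re with hw_def
  have h0 : X + (0:ℝ) • Y = X := by simp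
  have hEq : Set.EqOn (fun u => Fz' X Y 0 u)
      (fun u => ∑ i, ((1 - u) * (2 * (ev i - 1) * (1 + u * (ev i - 1))⁻¹ -
        u * (ev i - 1) ^ 2 * ((1 + u * (ev i - 1))⁻¹) ^ 2)) * w i)
      (Set.uIcc (0:ℝ) 1) := by
    intro u hu
    rw [Set.uIcc_of_le (by norm_num : (0:ℝ) ≤ 1)] at hu
    have hu' : ∀ i, 1 + u * (ev i - 1) ≠ 0 := fun i =>
      ne_of_gt (denom_pos (hevpos i) hu.1 hu.2)
    show Fz' X Y 0 u = _
    rw [Fz', h0, key3 hU hM1 u hu', Finset.mul_sum]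
    congr 1; funext i; ring
  rw [intervalIntegral.integral_congr hEq, intervalIntegral.integral_finset_sum]
  · have hterm : ∀ i ∈ Finset.univ, (∫ u in (0:ℝ)..1,
        ((1 - u) * (2 * (ev i - 1) * (1 + u * (ev i - 1))⁻¹ -
          u * (ev i - 1) ^ 2 * ((1 + u * (ev i - 1))⁻¹) ^ 2)) * w i) =
        Real.log (ev i) * w i := by
      intro i _
      rw [intervalIntegral.integral_mul_const, scalarS2 (hevpos i)]
    rw [Finset.sum_congr rfl hterm, key4 (Y := Y) hlog]
  · intro i _
    apply ContinuousOn.intervalIntegrable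
    rw [Set.uIcc_of_le (by norm_num : (0:ℝ) ≤ 1)]
    apply ContinuousOn.mul _ continuousOn_const
    apply ContinuousOn.mul
    · fun_prop
    apply ContinuousOn.sub
    · exact continuousOn_const.mul (denom_cont (ev i) (hevpos i))
    · exact ((continuous_id.mul continuous_const).continuousOn).mul
        ((denom_cont (ev i) (hevpos i)).pow 2)

end Assembly

/-- The gradient of `F(X) = tr(X Log X - X)` on Hermitian positive-definite matrices, with
respect to the inner product `⟨A,B⟩ = Re tr(AB)` on Hermitian matrices, is `∇F(X) = Log X`:
for every Hermitian direction `Y`, the directional derivative of `F` at `X` equals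
`⟨Log X, Y⟩ = Re tr(Log X * Y)`. -/
theorem gradient_vonNeumann_entropy {N : ℕ} (X : Matrix (Fin N) (Fin N) ℂ) (hX : X.PosDef)
    (Y : Matrix (Fin N) (Fin N) ℂ) (hY : Y.IsHermitian) :
    HasDerivAt
      (fun ε : ℝ => (Matrix.trace ((X + ε • Y) * matLog (X + ε • Y) - (X + ε • Y))).re)
      ((Matrix.trace (matLog X * Y)).re) 0 := by
  obtain ⟨δ, hδpos, hδ, hDer⟩ := hasDerivAt_integral_Fz X Y hX hY
  rw [← integral_Fz'_eq X Y hX]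
  have hg : HasDerivAt (fun t => (∫ u in (0:ℝ)..1, Fz X Y t u) - (N:ℝ))
      (∫ u in (0:ℝ)..1, Fz' X Y 0 u) 0 := hDer.sub_const _
  apply hg.congr_of_eventuallyEq
  filter_upwards [Metric.ball_mem_nhds (0:ℝ) hδpos] with t ht
  exact integral_Fz_eq X Y (hδ t (by simpa [Real.norm_eq_abs] using ht))
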